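/- Let p be a prime such that p* < p, where p* is the least positive integer n with p ∣ F_n. Then p divides C(0,0)_F · C(p*,1)_F (which equals F_{p*}), but p does not divide the fibonomial coefficient C((p*)², p*)_F. -/

import Mathlib

/-- The fibotorial `n!_F = F_n · F_{n-1} ⋯ F_1`, with `0!_F = 1`. -/
def fibotorial (n : ℕ) : ℕ := ∏ i ∈ Finset.range n, Nat.fib (i + 1)

/-- The fibonomial coefficient `C(n,k)_F = n!_F / (k!_F · (n-k)!_F)` for `k ≤ n`,
and `0` otherwise. -/
def fibnomial (n k : ℕ) : ℕ :=
  if k ≤ n then fibotorial n / (fibotorial k * fibotorial (n - k)) else 0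

/-- `p*`, the least positive integer `t` such that `p ∣ F_t` (the Fibonacci entry point). -/
noncomputable def fibEntry (p : ℕ) : ℕ := sInf {t : ℕ | 0 < t ∧ p ∣ Nat.fib t}

lemma exists_pos_dvd_fib (N : ℕ) (hN : 0 < N) : ∃ t, 0 < t ∧ N ∣ Nat.fib t := by
  haveI : NeZero N := ⟨hN.ne'⟩
  set S : ZMod N × ZMod N → ZMod N × ZMod N := fun x => (x.2, x.1 + x.2) with hS
  have hSinj : Function.Injective S := by
    intro a b h
    simp only [hS, Prod.mk.injEq] at h
    obtain ⟨h1, h2⟩ := h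
    rw [h1] at h2
    exact Prod.ext (add_right_cancel h2) h1
  set g : ℕ → ZMod N × ZMod N := fun n => ((Nat.fib n : ZMod N), (Nat.fib (n+1) : ZMod N)) with hg
  have hstep : ∀ n, g (n + 1) = S (g n) := by
    intro n
    simp only [hg, hS, Nat.fib_add_two]
    push_cast
    rw [add_comm]
  have hiter : ∀ n, g n = S^[n] (g 0) := by
    intro n
    induction n with
    | zero => rfl
    | succ k ih => rw [hstep, ih, Function.iterate_succ_apply']
  obtain ⟨a, b, hab, heq⟩ := Finite.exists_ne_map_eq_of_infinite g
  wlog hlt : a < b generalizing a b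
  · exact this b a hab.symm heq.symm (by omega)
  refine ⟨b - a, by omega, ?_⟩
  have hgg : g (b - a) = g 0 := by
    have h1 : S^[a] (S^[b-a] (g 0)) = S^[a] (g 0) := by
      rw [← Function.iterate_add_apply, Nat.add_sub_cancel' hlt.le, ← hiter, ← hiter, heq]
    rw [hiter (b-a)]
    exact (Function.Injective.iterate hSinj a) h1
  have h0 : (Nat.fib (b - a) : ZMod N) = ((Nat.fib 0 : ℕ) : ZMod N) := congrArg Prod.fst hgg
  rw [Nat.fib_zero] at h0
  exact (Nat.modEq_zero_iff_dvd).mp ((ZMod.natCast_eq_natCast_iff _ _ _).mp h0)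

lemma fibEntry_mem (N : ℕ) (hN : 0 < N) : 0 < fibEntry N ∧ N ∣ Nat.fib (fibEntry N) :=
  Nat.sInf_mem (exists_pos_dvd_fib N hN)

lemma fibEntry_le {N t : ℕ} (ht : 0 < t) (h : N ∣ Nat.fib t) : fibEntry N ≤ t :=
  Nat.sInf_le ⟨ht, h⟩

lemma fibEntry_dvd_iff (N n : ℕ) (hN : 0 < N) : N ∣ Nat.fib n ↔ fibEntry N ∣ n := by
  obtain ⟨hm, hd⟩ := fibEntry_mem N hN
  constructor
  · intro h
    rcases Nat.eq_zero_or_pos n with rfl | hn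
    · exact Nat.dvd_zero _
    have hg : N ∣ Nat.fib (Nat.gcd n (fibEntry N)) := by
      rw [Nat.fib_gcd]; exact Nat.dvd_gcd h hd
    have hgpos : 0 < Nat.gcd n (fibEntry N) := Nat.gcd_pos_of_pos_left _ hn
    have h1 : fibEntry N ≤ Nat.gcd n (fibEntry N) := fibEntry_le hgpos hg
    have h2 : Nat.gcd n (fibEntry N) ∣ fibEntry N := Nat.gcd_dvd_right _ _
    have h3 : Nat.gcd n (fibEntry N) = fibEntry N :=
      le_antisymm (Nat.le_of_dvd hm h2) h1
    rw [← h3]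
    exact Nat.gcd_dvd_left _ _
  · intro h
    exact dvd_trans hd (Nat.fib_dvd _ _ h)

lemma fibotorial_eq_Ioc (n : ℕ) : fibotorial n = ∏ j ∈ Finset.Ioc 0 n, Nat.fib j := by
  induction n with
  | zero => rfl
  | succ k ih =>
    rw [fibotorial, Finset.prod_range_succ, ← fibotorial, ih,
      ← Finset.prod_Ioc_succ_top (Nat.zero_le _)]

lemma fibotorial_pos (n : ℕ) : 0 < fibotorial n := by
  rw [fibotorial_eq_Ioc]
  exact Finset.prod_pos fun j hj => Nat.fib_pos.mpr (Finset.mem_Ioc.mp hj).1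

lemma factorization_fibotorial {q : ℕ} (hq : q.Prime) (n V : ℕ)
    (hV : ∀ j ∈ Finset.Ioc 0 n, (Nat.fib j).factorization q ≤ V) :
    (fibotorial n).factorization q = ∑ d ∈ Finset.Icc 1 V, n / fibEntry (q ^ d) := by
  rw [fibotorial_eq_Ioc,
    Nat.factorization_prod (fun j hj => (Nat.fib_pos.mpr (Finset.mem_Ioc.mp hj).1).ne'),
    Finset.sum_apply']
  have key : ∀ j ∈ Finset.Ioc 0 n, (Nat.fib j).factorization q
      = ∑ d ∈ Finset.Icc 1 V, if fibEntry (q ^ d) ∣ j then 1 else 0 := by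
    intro j hj
    obtain ⟨hj0, hjn⟩ := Finset.mem_Ioc.mp hj
    have hfib : Nat.fib j ≠ 0 := (Nat.fib_pos.mpr hj0).ne'
    have h1 : ∀ d ∈ Finset.Icc 1 V, (if fibEntry (q ^ d) ∣ j then 1 else 0)
        = (if d ≤ (Nat.fib j).factorization q then (1:ℕ) else 0) := by
      intro d hd
      refine if_congr ?_ rfl rfl
      rw [← fibEntry_dvd_iff _ _ (pow_pos hq.pos d),
        hq.pow_dvd_iff_le_factorization hfib]
    rw [Finset.sum_congr rfl h1, ← Finset.sum_filter]
    have h2 : (Finset.Icc 1 V).filter (fun d => d ≤ (Nat.fib j).factorization q)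
        = Finset.Icc 1 ((Nat.fib j).factorization q) := by
      have := hV j hj
      ext x
      simp only [Finset.mem_filter, Finset.mem_Icc]
      omega
    rw [h2, Finset.sum_const, Nat.card_Icc, smul_eq_mul, mul_one]
    omega
  rw [Finset.sum_congr rfl key, Finset.sum_comm]
  refine Finset.sum_congr rfl fun d _ => ?_
  rw [← Finset.sum_filter, Finset.sum_const, smul_eq_mul, mul_one,
    Nat.Ioc_filter_dvd_card_eq_div]


lemma factorization_fib_le {j n : ℕ} (q : ℕ) (hj : j ∈ Finset.Ioc 0 n) :
    (Nat.fib j).factorization q ≤ Nat.fib n := by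
  obtain ⟨hj0, hjn⟩ := Finset.mem_Ioc.mp hj
  have hfpos : 0 < Nat.fib j := Nat.fib_pos.mpr hj0
  by_cases hq : q.Prime
  · have h1 : q ^ (Nat.fib j).factorization q ≤ Nat.fib j :=
      Nat.le_of_dvd hfpos (Nat.ordProj_dvd _ _)
    have h2 : (Nat.fib j).factorization q < q ^ (Nat.fib j).factorization q :=
      Nat.lt_pow_self hq.one_lt
    have h3 : Nat.fib j ≤ Nat.fib n := Nat.fib_mono hjn
    omega
  · simp [Nat.factorization_eq_zero_of_not_prime _ hq]

lemma fibotorial_mul_dvd (a b : ℕ) : fibotorial a * fibotorial b ∣ fibotorial (a + b) := by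
  rw [← Nat.factorization_le_iff_dvd
    (Nat.mul_ne_zero (fibotorial_pos a).ne' (fibotorial_pos b).ne') (fibotorial_pos (a+b)).ne']
  rw [Nat.factorization_mul (fibotorial_pos a).ne' (fibotorial_pos b).ne']
  intro q
  by_cases hq : q.Prime
  · set V := Nat.fib (a + b) with hV
    have hVa : ∀ j ∈ Finset.Ioc 0 a, (Nat.fib j).factorization q ≤ V := by
      intro j hj
      obtain ⟨hj0, hjn⟩ := Finset.mem_Ioc.mp hj
      exact factorization_fib_le q (Finset.mem_Ioc.mpr ⟨hj0, by omega⟩)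
    have hVb : ∀ j ∈ Finset.Ioc 0 b, (Nat.fib j).factorization q ≤ V := by
      intro j hj
      obtain ⟨hj0, hjn⟩ := Finset.mem_Ioc.mp hj
      exact factorization_fib_le q (Finset.mem_Ioc.mpr ⟨hj0, by omega⟩)
    have hVab : ∀ j ∈ Finset.Ioc 0 (a+b), (Nat.fib j).factorization q ≤ V :=
      fun j hj => factorization_fib_le q hj
    simp only [Finsupp.coe_add, Pi.add_apply]
    rw [factorization_fibotorial hq a V hVa, factorization_fibotorial hq b V hVb,
      factorization_fibotorial hq (a+b) V hVab, ← Finset.sum_add_distrib]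
    refine Finset.sum_le_sum fun d _ => ?_
    have ht : 0 < fibEntry (q ^ d) := (fibEntry_mem _ (pow_pos hq.pos d)).1
    -- a/t + b/t ≤ (a+b)/t
    rw [Nat.le_div_iff_mul_le ht, add_mul]
    exact Nat.add_le_add (Nat.div_mul_le_self a _) (Nat.div_mul_le_self b _)
  · simp [Nat.factorization_eq_zero_of_not_prime _ hq]


lemma fib_mul_modId (m : ℕ) (hm : 0 < m) (k : ℕ) :
    ((Nat.fib (k * m) : ZMod (Nat.fib m ^ 2))
        = ((k * Nat.fib m * Nat.fib (m+1) ^ (k-1) : ℕ) : ZMod (Nat.fib m ^ 2)))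
    ∧ ((Nat.fib (k * m + 1) : ZMod (Nat.fib m ^ 2))
        = ((Nat.fib (m+1) ^ k : ℕ) : ZMod (Nat.fib m ^ 2))) := by
  set R := ZMod (Nat.fib m ^ 2)
  have hFF : (Nat.fib m : R) * (Nat.fib m : R) = 0 := by
    have h := ZMod.natCast_self (Nat.fib m ^ 2)
    push_cast at h
    rw [← pow_two]
    exact h
  have hG : (Nat.fib (m+1) : R) = (Nat.fib (m-1) : R) + (Nat.fib m : R) := by
    have h : Nat.fib (m+1) = Nat.fib (m-1) + Nat.fib m := by
      conv_lhs => rw [show m + 1 = (m-1) + 2 by omega]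
      rw [Nat.fib_add_two, show m - 1 + 1 = m by omega]
    rw [h]; push_cast; ring
  induction k with
  | zero => simp
  | succ k ih =>
    obtain ⟨ih1, ih2⟩ := ih
    push_cast at ih1 ih2 ⊢
    have hfa1 : Nat.fib ((k+1) * m) = Nat.fib (k*m) * Nat.fib (m-1)
        + Nat.fib (k*m+1) * Nat.fib m := by
      have := Nat.fib_add (k*m) (m-1)
      rw [show k*m + (m-1) + 1 = (k+1)*m by ring_nf; omega,
        show m - 1 + 1 = m by omega] at this
      exact this
    have hfa2 : Nat.fib ((k+1) * m + 1) = Nat.fib (k*m) * Nat.fib m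
        + Nat.fib (k*m+1) * Nat.fib (m+1) := by
      have := Nat.fib_add (k*m) m
      rw [show k*m + m + 1 = (k+1)*m + 1 by ring] at this
      exact this
    have hpow : ((k:R) * Nat.fib m * (Nat.fib (m+1) : R) ^ (k-1)) * (Nat.fib (m+1) : R)
        = (k:R) * Nat.fib m * (Nat.fib (m+1) : R) ^ k := by
      cases k with
      | zero => simp
      | succ n => rw [Nat.add_sub_cancel, mul_assoc, ← pow_succ]
    constructor
    · rw [hfa1]
      push_cast
      rw [ih1, ih2]
      linear_combination (-(k:R) * (Nat.fib m : R) * (Nat.fib (m+1) : R) ^ (k-1)) * hG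
        + hpow + (-(k:R) * (Nat.fib (m+1) : R) ^ (k-1)) * hFF
    · rw [hfa2]
      push_cast
      rw [ih1, ih2]
      linear_combination ((k:R) * (Nat.fib (m+1) : R) ^ (k-1)) * hFF

lemma not_pow_succ_dvd_fib_mul {p m k : ℕ} (hp : p.Prime) (hm : 0 < m)
    (hpF : p ∣ Nat.fib m) (hk : ¬ p ∣ k) :
    ¬ p ^ ((Nat.fib m).factorization p + 1) ∣ Nat.fib (k * m) := by
  intro hcon
  set e := (Nat.fib m).factorization p with he
  have hFne : Nat.fib m ≠ 0 := (Nat.fib_pos.mpr hm).ne'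
  have he1 : 1 ≤ e := by
    rw [he, ← hp.pow_dvd_iff_le_factorization hFne, pow_one]
    exact hpF
  have hdvdF2 : p ^ (e+1) ∣ Nat.fib m ^ 2 := by
    calc p ^ (e+1) ∣ p ^ (2*e) := pow_dvd_pow p (by omega)
      _ = (p ^ e) ^ 2 := by rw [← pow_mul, mul_comm]
      _ ∣ Nat.fib m ^ 2 := pow_dvd_pow_of_dvd (Nat.ordProj_dvd _ _) 2
  have hcong : Nat.fib (k*m) ≡ k * Nat.fib m * Nat.fib (m+1) ^ (k-1) [MOD Nat.fib m ^ 2] :=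
    (ZMod.natCast_eq_natCast_iff _ _ _).mp (fib_mul_modId m hm k).1
  have hX : p ^ (e+1) ∣ k * Nat.fib m * Nat.fib (m+1) ^ (k-1) :=
    (Nat.modEq_zero_iff_dvd).mp
      (((Nat.ModEq.of_dvd hdvdF2 hcong).symm).trans ((Nat.modEq_zero_iff_dvd).mpr hcon))
  have hpG : ¬ p ∣ Nat.fib (m+1) := by
    intro h
    exact hp.one_lt.ne' (Nat.eq_one_of_dvd_coprimes (Nat.fib_coprime_fib_succ m) hpF h)
  have hcop1 : Nat.Coprime (p ^ (e+1)) k :=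
    Nat.Coprime.pow_left _ (hp.coprime_iff_not_dvd.mpr hk)
  have hcop2 : Nat.Coprime (p ^ (e+1)) (Nat.fib (m+1) ^ (k-1)) :=
    Nat.Coprime.pow _ _ (hp.coprime_iff_not_dvd.mpr hpG)
  have h1 : p ^ (e+1) ∣ k * Nat.fib m := hcop2.dvd_of_dvd_mul_right hX
  have h2 : p ^ (e+1) ∣ Nat.fib m := hcop1.dvd_of_dvd_mul_left h1
  exact Nat.pow_succ_factorization_not_dvd hFne hp h2


lemma sum_ite_le (V e c : ℕ) (h : e ≤ V) :
    (∑ d ∈ Finset.Icc 1 V, if d ≤ e then c else 0) = e * c := by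
  rw [← Finset.sum_filter]
  have h2 : (Finset.Icc 1 V).filter (fun d => d ≤ e) = Finset.Icc 1 e := by
    ext x; simp only [Finset.mem_filter, Finset.mem_Icc]; omega
  rw [h2, Finset.sum_const, Nat.card_Icc, smul_eq_mul, Nat.add_sub_cancel]

theorem fibnomial_counterexample_of_entry_lt (p : ℕ) (hp : p.Prime)
    (hlt : fibEntry p < p) :
    p ∣ fibnomial 0 0 * fibnomial (fibEntry p) 1 ∧
      ¬ p ∣ fibnomial (fibEntry p ^ 2) (fibEntry p) := by
  obtain ⟨hm_pos, hpFm⟩ := fibEntry_mem p hp.pos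
  set m := fibEntry p with hmdef
  have hm2 : 2 ≤ m := by
    rcases Nat.lt_or_ge m 2 with h | h
    · exfalso
      have hm1 : m = 1 := by omega
      rw [hm1, Nat.fib_one, Nat.dvd_one] at hpFm
      have := hp.one_lt
      omega
    · exact h
  have hFne : Nat.fib m ≠ 0 := (Nat.fib_pos.mpr hm_pos).ne'
  set e := (Nat.fib m).factorization p with hedef
  have he1 : 1 ≤ e := by
    rw [hedef, ← hp.pow_dvd_iff_le_factorization hFne, pow_one]
    exact hpFm
  have hmm : m ≤ m ^ 2 := Nat.le_self_pow two_ne_zero m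
  have h2m : 2 * m ≤ m * m := Nat.mul_le_mul hm2 (le_refl m)
  -- entries of prime powers
  have hEd_le : ∀ d, 1 ≤ d → d ≤ e → fibEntry (p ^ d) = m := by
    intro d hd1 hde
    have hpd : 0 < p ^ d := pow_pos hp.pos d
    have h1 : p ^ d ∣ Nat.fib m :=
      dvd_trans (pow_dvd_pow p hde) (Nat.ordProj_dvd _ _)
    have h2 : fibEntry (p ^ d) ∣ m := (fibEntry_dvd_iff _ _ hpd).mp h1
    have h3 : p ∣ Nat.fib (fibEntry (p ^ d)) :=
      dvd_trans (dvd_trans (dvd_pow_self p (by omega : d ≠ 0)) dvd_rfl)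
        (fibEntry_mem _ hpd).2
    have h4 : m ∣ fibEntry (p ^ d) := (fibEntry_dvd_iff p _ hp.pos).mp h3
    exact Nat.dvd_antisymm h2 h4
  have hEd_gt : ∀ d, e < d → m ^ 2 < fibEntry (p ^ d) := by
    intro d hde
    have hpd : 0 < p ^ d := pow_pos hp.pos d
    obtain ⟨ht_pos, hdF⟩ := fibEntry_mem (p ^ d) hpd
    set t := fibEntry (p ^ d) with htdef
    have h3 : p ∣ Nat.fib t :=
      dvd_trans (dvd_pow_self p (by omega : d ≠ 0)) hdF
    have h4 : m ∣ t := (fibEntry_dvd_iff p _ hp.pos).mp h3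
    by_contra hcon
    push_neg at hcon
    obtain ⟨k, hk⟩ := h4
    have hk1 : 1 ≤ k := by
      rcases Nat.eq_zero_or_pos k with rfl | h
      · omega
      · exact h
    have hkm : k ≤ m := by nlinarith [hk, hcon, pow_two m]
    have hpk : ¬ p ∣ k := fun h => by
      have := Nat.le_of_dvd (by omega) h
      omega
    have h5 : p ^ (e + 1) ∣ Nat.fib (k * m) := by
      rw [mul_comm, ← hk]
      exact dvd_trans (pow_dvd_pow p (by omega)) hdF
    exact not_pow_succ_dvd_fib_mul hp hm_pos hpFm hpk h5
  -- valuation of fibotorials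
  set V := Nat.fib (m ^ 2) with hVdef
  have heV : e ≤ V := by
    have h1 : e ≤ Nat.fib m := factorization_fib_le p (Finset.mem_Ioc.mpr ⟨hm_pos, le_refl m⟩)
    exact le_trans h1 (Nat.fib_mono hmm)
  have hval : ∀ n, m ≤ n → n ≤ m ^ 2 →
      (fibotorial n).factorization p = e * (n / m) := by
    intro n hn1 hn2
    have hV' : ∀ j ∈ Finset.Ioc 0 n, (Nat.fib j).factorization p ≤ V := by
      intro j hj
      obtain ⟨hj0, hjn⟩ := Finset.mem_Ioc.mp hj
      exact factorization_fib_le p (Finset.mem_Ioc.mpr ⟨hj0, by omega⟩)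
    rw [factorization_fibotorial hp n V hV']
    rw [show (∑ d ∈ Finset.Icc 1 V, n / fibEntry (p ^ d))
        = ∑ d ∈ Finset.Icc 1 V, if d ≤ e then n / m else 0 from
      Finset.sum_congr rfl fun d hd => by
        obtain ⟨hd1, hdV⟩ := Finset.mem_Icc.mp hd
        by_cases hde : d ≤ e
        · rw [if_pos hde, hEd_le d hd1 hde]
        · rw [if_neg hde]
          exact Nat.div_eq_of_lt (lt_of_le_of_lt hn2 (hEd_gt d (by omega)))]
    exact sum_ite_le V e (n / m) heV
  -- assemble
  have hA : (fibotorial (m ^ 2)).factorization p = e * m := by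
    rw [hval (m ^ 2) hmm (le_refl _), pow_two, Nat.mul_div_cancel _ (by omega)]
  have hBm : (fibotorial m).factorization p = e := by
    rw [hval m (le_refl _) hmm, Nat.div_self (by omega), mul_one]
  have hsub : m ^ 2 - m = m * (m - 1) := by
    rcases Nat.exists_eq_add_of_le (show 1 ≤ m by omega) with ⟨n, hn⟩
    rw [hn, show (1+n) = n+1 by omega, Nat.add_sub_cancel, pow_two, Nat.mul_succ,
      Nat.add_sub_cancel]
  have hB2 : (fibotorial (m ^ 2 - m)).factorization p = e * (m - 1) := by
    have hle1 : m ≤ m ^ 2 - m := by rw [pow_two]; omega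
    have hle2 : m ^ 2 - m ≤ m ^ 2 := by omega
    rw [hval (m ^ 2 - m) hle1 hle2, hsub,
      Nat.mul_div_cancel_left _ (by omega : 0 < m)]
  have hdvd : fibotorial m * fibotorial (m ^ 2 - m) ∣ fibotorial (m ^ 2) := by
    have := fibotorial_mul_dvd m (m ^ 2 - m)
    rwa [show m + (m ^ 2 - m) = m ^ 2 by omega] at this
  set B := fibotorial m * fibotorial (m ^ 2 - m) with hBdef
  set Q := fibotorial (m ^ 2) / B with hQdef
  have hBpos : 0 < B := Nat.mul_pos (fibotorial_pos _) (fibotorial_pos _)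
  have hQpos : 0 < Q := Nat.div_pos (Nat.le_of_dvd (fibotorial_pos _) hdvd) hBpos
  have hAQ : fibotorial (m ^ 2) = B * Q := (Nat.mul_div_cancel' hdvd).symm
  have hQ0 : Q.factorization p = 0 := by
    have h1 : (fibotorial (m ^ 2)).factorization p
        = B.factorization p + Q.factorization p := by
      rw [hAQ, Nat.factorization_mul hBpos.ne' hQpos.ne']
      simp
    have h2 : B.factorization p = e * m := by
      rw [hBdef, Nat.factorization_mul (fibotorial_pos _).ne' (fibotorial_pos _).ne']
      simp only [Finsupp.coe_add, Pi.add_apply]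
      rw [hBm, hB2]
      have hm' : 1 + (m - 1) = m := by omega
      calc e + e * (m - 1) = e * (1 + (m - 1)) := by ring
        _ = e * m := by rw [hm']
    rw [hA, h2] at h1
    omega
  constructor
  · -- first part
    have h1 : fibnomial m 1 = Nat.fib m := by
      rw [fibnomial, if_pos (show (1:ℕ) ≤ m by omega)]
      have hf1 : fibotorial 1 = 1 := by simp [fibotorial]
      have hstep : fibotorial m = fibotorial (m - 1) * Nat.fib m := by
        conv_lhs => rw [show m = (m - 1) + 1 by omega]
        rw [fibotorial, Finset.prod_range_succ, ← fibotorial,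
          show m - 1 + 1 = m by omega]
      rw [hf1, one_mul, hstep]
      exact Nat.mul_div_cancel_left _ (fibotorial_pos (m-1))
    have h0 : fibnomial 0 0 = 1 := by simp [fibnomial, fibotorial]
    rw [h0, h1, one_mul]
    exact hpFm
  · -- second part
    intro hcon
    have h2 : fibnomial (m ^ 2) m = Q := by
      rw [fibnomial, if_pos hmm]
    rw [h2] at hcon
    have : 1 ≤ Q.factorization p := by
      rw [← hp.pow_dvd_iff_le_factorization hQpos.ne', pow_one]
      exact hcon
    omega
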